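/- The exchange step preserving weight: in a graph satisfying the Monge property, if C' is a maximum-weight cycle cover and an edge (u,v) not in C' dominates both edges (u,v') ∈ C' and (u',v) ∈ C', then replacing (u,v') and (u',v) by (u,v) and (u',v') yields a cycle cover of weight at least that of C'. -/

import Mathlib

open scoped Classical

/-- Edge `e` dominates `e'` if they share a tail or a head and `e` has at
least as large weight. -/
def Dominates {V : Type*} (w : V → V → ℝ) (e e' : V × V) : Prop :=
  (e'.1 = e.1 ∨ e'.2 = e.2) ∧ w e'.1 e'.2 ≤ w e.1 e.2

/-- Strict domination. -/
def StrictlyDominates {V : Type*} (w : V → V → ℝ) (e e' : V × V) : Prop :=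
  (e'.1 = e.1 ∨ e'.2 = e.2) ∧ w e'.1 e'.2 < w e.1 e.2

/-- The Monge property: if `(u,v)` dominates `(u,v')` and `(u',v)`, then
`w(u,v) + w(u',v') ≥ w(u,v') + w(u',v)`. -/
def MongeProp {V : Type*} (w : V → V → ℝ) : Prop :=
  ∀ u v u' v', w u v' ≤ w u v → w u' v ≤ w u v →
    w u v' + w u' v ≤ w u v + w u' v'

/-- A cycle cover: every node has in-degree 1 and out-degree 1. -/
def IsCycleCover {V : Type*} [Fintype V] [DecidableEq V] (C : Finset (V × V)) : Prop :=
  ∀ v : V, (C.filter (fun e => e.1 = v)).card = 1 ∧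
    (C.filter (fun e => e.2 = v)).card = 1

/-- Total weight of an edge set. -/
noncomputable def edgeWeight {V : Type*} (w : V → V → ℝ) (C : Finset (V × V)) : ℝ :=
  ∑ e ∈ C, w e.1 e.2

/-- The greedy algorithm CYC: process edges in order, rejecting an edge iff it
is dominated by an already chosen edge. -/
noncomputable def greedyCC {V : Type*} [DecidableEq V] (w : V → V → ℝ) :
    List (V × V) → Finset (V × V) → Finset (V × V)
  | [], acc => acc
  | e :: rest, acc =>
      if ∃ e' ∈ acc, Dominates w e' e then greedyCC w rest acc
      else greedyCC w rest (insert e acc)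

/-- A dominance-respecting order on the list of all edges. -/
def DomRespecting {V : Type*} [Fintype V] [DecidableEq V] (w : V → V → ℝ)
    (L : List (V × V)) : Prop :=
  L.Nodup ∧ (∀ e : V × V, e ∈ L) ∧
  ∀ e e' : V × V, StrictlyDominates w e e' → L.idxOf e ≤ L.idxOf e'


lemma card_one_eq {α : Type*} {s : Finset α} (h : s.card = 1) {a b : α}
    (ha : a ∈ s) (hb : b ∈ s) : a = b := by
  obtain ⟨c, rfl⟩ := Finset.card_eq_one.mp h
  simp_all

lemma exchange_aux {V : Type*} [Fintype V] [DecidableEq V] (w : V → V → ℝ)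
    (hw : ∀ u v : V, 0 ≤ w u v)
    (hmonge : ∀ u v u' v', w u v' ≤ w u v → w u' v ≤ w u v →
      w u v' + w u' v ≤ w u v + w u' v')
    (C' : Finset (V × V))
    (hcc : ∀ x : V, (C'.filter (fun e => e.1 = x)).card = 1 ∧
      (C'.filter (fun e => e.2 = x)).card = 1)
    (u v u' v' : V)
    (huv : (u, v) ∉ C') (huv' : (u, v') ∈ C') (hu'v : (u', v) ∈ C')
    (hd1 : w u v' ≤ w u v) (hd2 : w u' v ≤ w u v) :
    (∀ x : V, ((insert (u, v) (insert (u', v')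
        ((C'.erase (u, v')).erase (u', v)))).filter (fun e => e.1 = x)).card = 1 ∧
      ((insert (u, v) (insert (u', v')
        ((C'.erase (u, v')).erase (u', v)))).filter (fun e => e.2 = x)).card = 1) ∧
    (∑ e ∈ C', w e.1 e.2) ≤ (∑ e ∈ insert (u, v) (insert (u', v')
        ((C'.erase (u, v')).erase (u', v))), w e.1 e.2) := by
  have huu' : u ≠ u' := by rintro rfl; exact huv hu'v
  have hvv' : v ≠ v' := by rintro rfl; exact huv huv'
  -- uniqueness facts
  have eqout : ∀ e ∈ C', ∀ x, e.1 = x → ∀ e' ∈ C', e'.1 = x → e = e' := by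
    intro e he x hx e' he' hx'
    exact card_one_eq (hcc x).1 (Finset.mem_filter.mpr ⟨he, hx⟩)
      (Finset.mem_filter.mpr ⟨he', hx'⟩)
  have eqin : ∀ e ∈ C', ∀ x, e.2 = x → ∀ e' ∈ C', e'.2 = x → e = e' := by
    intro e he x hx e' he' hx'
    exact card_one_eq (hcc x).2 (Finset.mem_filter.mpr ⟨he, hx⟩)
      (Finset.mem_filter.mpr ⟨he', hx'⟩)
  have hu'v' : (u', v') ∉ C' := by
    intro h
    have := eqout _ h u' rfl _ hu'v rfl
    simp_all
  set E := (C'.erase (u, v')).erase (u', v) with hE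
  have huvE : (u, v) ∉ insert (u', v') E := by
    simp only [Finset.mem_insert, Prod.mk.injEq, hE, Finset.mem_erase]
    push_neg
    refine ⟨fun h => absurd h huu', fun _ _ => huv⟩
  have hu'v'E : (u', v') ∉ E := by
    simp only [hE, Finset.mem_erase]
    exact fun h => hu'v' h.2.2
  constructor
  · intro x
    constructor
    · rw [Finset.filter_insert, Finset.filter_insert]
      by_cases hxu : u = x
      · subst hxu
        rw [if_pos rfl, if_neg (by simp [Prod.ext_iff]; intro h; exact absurd h.symm huu')]
        have : E.filter (fun e => e.1 = u) = ∅ := by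
          apply Finset.filter_eq_empty_iff.mpr
          intro e he h1
          have he' : e ∈ C' := Finset.mem_of_mem_erase (Finset.mem_of_mem_erase he)
          have := eqout _ he' u h1 _ huv' rfl
          subst this
          simp [hE] at he
        rw [this]
        simp
      · rw [if_neg hxu]
        by_cases hxu' : u' = x
        · subst hxu'
          rw [if_pos rfl]
          have : E.filter (fun e => e.1 = u') = ∅ := by
            apply Finset.filter_eq_empty_iff.mpr
            intro e he h1
            have he' : e ∈ C' := Finset.mem_of_mem_erase (Finset.mem_of_mem_erase he)
            have := eqout _ he' u' h1 _ hu'v rfl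
            subst this
            simp [hE] at he
          rw [this]
          simp
        · rw [if_neg hxu']
          have : E.filter (fun e => e.1 = x) = C'.filter (fun e => e.1 = x) := by
            rw [hE, Finset.filter_erase, Finset.filter_erase,
              Finset.erase_eq_of_notMem, Finset.erase_eq_of_notMem]
            · simp [Finset.mem_filter]; intro _; exact hxu
            · simp [Finset.mem_filter, Finset.mem_erase]; intro _ _; exact hxu'
          rw [this]; exact (hcc x).1
    · rw [Finset.filter_insert, Finset.filter_insert]
      by_cases hxv : v = x
      · subst hxv
        rw [if_pos rfl, if_neg (by simp [Prod.ext_iff]; intro h; exact absurd h.symm hvv')]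
        have : E.filter (fun e => e.2 = v) = ∅ := by
          apply Finset.filter_eq_empty_iff.mpr
          intro e he h1
          have he' : e ∈ C' := Finset.mem_of_mem_erase (Finset.mem_of_mem_erase he)
          have := eqin _ he' v h1 _ hu'v rfl
          subst this
          simp [hE] at he
        rw [this]
        simp
      · rw [if_neg hxv]
        by_cases hxv' : v' = x
        · subst hxv'
          rw [if_pos rfl]
          have : E.filter (fun e => e.2 = v') = ∅ := by
            apply Finset.filter_eq_empty_iff.mpr
            intro e he h1
            have he' : e ∈ C' := Finset.mem_of_mem_erase (Finset.mem_of_mem_erase he)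
            have := eqin _ he' v' h1 _ huv' rfl
            subst this
            simp [hE] at he
          rw [this]
          simp
        · rw [if_neg hxv']
          have : E.filter (fun e => e.2 = x) = C'.filter (fun e => e.2 = x) := by
            rw [hE, Finset.filter_erase, Finset.filter_erase,
              Finset.erase_eq_of_notMem, Finset.erase_eq_of_notMem]
            · simp [Finset.mem_filter]; intro _; exact hxv'
            · simp [Finset.mem_filter, Finset.mem_erase]; intro _ _; exact hxv
          rw [this]; exact (hcc x).2
  · have hu'vE : (u', v) ∈ C'.erase (u, v') := by
      refine Finset.mem_erase.mpr ⟨?_, hu'v⟩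
      simp [Prod.ext_iff]
      exact fun h => absurd h (Ne.symm huu')
    have hC'sum : (∑ e ∈ C', w e.1 e.2)
        = w u v' + (w u' v + ∑ e ∈ E, w e.1 e.2) := by
      rw [hE, ← Finset.add_sum_erase _ _ huv', ← Finset.add_sum_erase _ _ hu'vE]
    have hDsum : (∑ e ∈ insert (u, v) (insert (u', v') E), w e.1 e.2)
        = w u v + (w u' v' + ∑ e ∈ E, w e.1 e.2) := by
      rw [Finset.sum_insert huvE, Finset.sum_insert hu'v'E]
    rw [hC'sum, hDsum]
    have := hmonge u v u' v' hd1 hd2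
    linarith

/-- The exchange step: if an unused edge `(u,v)` dominates both incident edges
`(u,v')` and `(u',v)` of a maximum-weight cycle cover `C'`, swapping them for
`(u,v)` and `(u',v')` again yields a cycle cover of at least the same weight. -/
theorem stmt_9 {V : Type*} [Fintype V] [DecidableEq V] (w : V → V → ℝ)
    (hw : ∀ u v : V, 0 ≤ w u v) (hmonge : MongeProp w)
    (C' : Finset (V × V)) (hcc : IsCycleCover C')
    (hmax : ∀ C'' : Finset (V × V), IsCycleCover C'' →
      edgeWeight w C'' ≤ edgeWeight w C')
    (u v u' v' : V)
    (huv : (u, v) ∉ C') (huv' : (u, v') ∈ C') (hu'v : (u', v) ∈ C')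
    (hdom1 : Dominates w (u, v) (u, v'))
    (hdom2 : Dominates w (u, v) (u', v)) :
    IsCycleCover (insert (u, v) (insert (u', v')
        ((C'.erase (u, v')).erase (u', v)))) ∧
    edgeWeight w C' ≤ edgeWeight w (insert (u, v) (insert (u', v')
        ((C'.erase (u, v')).erase (u', v)))) := by
  exact exchange_aux w hw hmonge C' hcc u v u' v' huv huv' hu'v hdom1.2 hdom2.2
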